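/- The intertwining operators fix the image of the localization map on invariants: for every w ∈ W and every W-invariant element f ∈ ℤ[P], one has I_w( f · ∏_{α∈Φ⁺} (1 − e(−α)) ) = f · ∏_{α∈Φ⁺} (1 − e(−α)). -/

import Mathlib

set_option linter.unusedSectionVars false

open Finset

/-- A finite reduced crystallographic root system `Φ` spanning a real vector space `E`,
together with coroots `α∨` (`coroot α λ = ⟨λ, α∨⟩`) and a linear functional `posFun`
(nonvanishing on the roots) cutting out the fixed positive system `Φ⁺`. -/
structure PreWeylContext (E : Type) [AddCommGroup E] [Module ℝ E] : Type where
  Φ : Finset E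
  coroot : E → (E →ₗ[ℝ] ℝ)
  posFun : E →ₗ[ℝ] ℝ
  span_eq_top : Submodule.span ℝ (Φ : Set E) = ⊤
  root_ne_zero : ∀ α ∈ Φ, α ≠ 0
  coroot_self : ∀ α ∈ Φ, coroot α α = 2
  reflect_mem : ∀ α ∈ Φ, ∀ β ∈ Φ, β - coroot α β • α ∈ Φ
  crystallographic : ∀ α ∈ Φ, ∀ β ∈ Φ, ∃ n : ℤ, coroot α β = n
  reduced : ∀ α ∈ Φ, ∀ t : ℝ, t • α ∈ Φ → t = 1 ∨ t = -1
  posFun_ne_zero : ∀ α ∈ Φ, posFun α ≠ 0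

namespace PreWeylContext

variable {E : Type} [AddCommGroup E] [Module ℝ E] (C : PreWeylContext E)

/-- The positive system `Φ⁺`. -/
noncomputable def pos : Finset E := C.Φ.filter fun α => 0 < C.posFun α

theorem pos_subset : C.pos ⊆ C.Φ := Finset.filter_subset _ _

/-- The simple roots: the indecomposable positive roots. -/
noncomputable def simple [DecidableEq E] : Finset E :=
  C.pos.filter fun α => ¬ ∃ β ∈ C.pos, ∃ γ ∈ C.pos, α = β + γ

theorem simple_subset [DecidableEq E] : C.simple ⊆ C.Φ :=
  fun x h => C.pos_subset (Finset.mem_of_mem_filter x h)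

/-- `ρ`, the half sum of the positive roots. -/
noncomputable def rho : E := (2 : ℝ)⁻¹ • ∑ α ∈ C.pos, α

/-- `g` is the reflection `s_α` in the root `α`. -/
def IsReflection (g : E ≃ₗ[ℝ] E) (α : E) : Prop := ∀ y, g y = y - C.coroot α y • α

/-- The Weyl group `W`, generated by the reflections in the roots. -/
def weylGroup : Subgroup (E ≃ₗ[ℝ] E) :=
  Subgroup.closure {g | ∃ α ∈ C.Φ, C.IsReflection g α}

/-- The weight lattice `P = {λ ∈ E : ⟨λ, α∨⟩ ∈ ℤ for all α ∈ Φ}`. -/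
def P : AddSubgroup E :=
  ⨅ α ∈ C.Φ, AddSubgroup.comap (C.coroot α).toAddMonoidHom (Int.castAddHom ℝ).range

/-- The length function `ℓ` on the Weyl group: the minimal length of a word
in the simple reflections. -/
noncomputable def len [DecidableEq E] (w : C.weylGroup) : ℕ :=
  sInf {n | ∃ l : List C.weylGroup,
    (∀ s ∈ l, ∃ α ∈ C.simple, C.IsReflection s.1 α) ∧ l.prod = w ∧ l.length = n}

end PreWeylContext

/-- Full context: in addition, `ρ` and the roots lie in the weight lattice `P`,
and `P` is stable under the Weyl group (all automatic for crystallographic root systems). -/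
structure WeylContext (E : Type) [AddCommGroup E] [Module ℝ E] extends PreWeylContext E where
  rho_mem : toPreWeylContext.rho ∈ toPreWeylContext.P
  root_mem : ∀ α ∈ toPreWeylContext.Φ, α ∈ toPreWeylContext.P
  weyl_stable : ∀ g ∈ toPreWeylContext.weylGroup, ∀ x ∈ toPreWeylContext.P, g x ∈ toPreWeylContext.P

namespace WeylContext

variable {E : Type} [AddCommGroup E] [Module ℝ E] [DecidableEq E] (C : WeylContext E)

/-- The basis element `e(λ)` of the group algebra `ℤ[P]`. -/
noncomputable def e (x : C.P) : AddMonoidAlgebra ℤ C.P := AddMonoidAlgebra.single x 1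

/-- `ρ` as an element of `P`. -/
noncomputable def rhoP : C.P := ⟨C.rho, C.rho_mem⟩

/-- A root, as an element of `P`. -/
def rootP {α : E} (h : α ∈ C.Φ) : C.P := ⟨α, C.root_mem α h⟩

/-- A positive root, as an element of `P`. -/
def posP {α : E} (h : α ∈ C.pos) : C.P := C.rootP (C.pos_subset h)

/-- The action of a Weyl group element on the weight lattice `P`. -/
def wP (w : C.weylGroup) (x : C.P) : C.P := ⟨w.1 x.1, C.weyl_stable w.1 w.2 x.1 x.2⟩

/-- The action of a Weyl group element on `ℤ[P]`: the ring automorphism with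
`w · e(λ) = e(w(λ))`, as a `ℤ`-linear map. -/
noncomputable def act (w : C.weylGroup) :
    AddMonoidAlgebra ℤ C.P →ₗ[ℤ] AddMonoidAlgebra ℤ C.P :=
  AddMonoidAlgebra.mapDomainLinearMap ℤ ℤ (C.wP w)

/-- The reflection `s_α` in a root, as a linear automorphism of `E`. -/
noncomputable def refl {α : E} (h : α ∈ C.Φ) : E ≃ₗ[ℝ] E :=
  Module.reflection (C.coroot_self α h)

theorem isReflection_refl {α : E} (h : α ∈ C.Φ) : C.IsReflection (C.refl h) α :=
  fun y => Module.reflection_apply y (C.coroot_self α h)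

theorem refl_mem {α : E} (h : α ∈ C.Φ) : C.refl h ∈ C.weylGroup :=
  Subgroup.subset_closure ⟨α, h, C.isReflection_refl h⟩

/-- The reflection `s_α` as an element of the Weyl group. -/
noncomputable def sW {α : E} (h : α ∈ C.Φ) : C.weylGroup := ⟨C.refl h, C.refl_mem h⟩

/-- The Weyl denominator `∏_{α ∈ Φ⁺} (1 - e(-α)) ∈ ℤ[P]`. -/
noncomputable def denom : AddMonoidAlgebra ℤ C.P :=
  ∏ α ∈ C.pos.attach, (1 - C.e (-C.posP α.2))

/-- The alternating Weyl sum `Σ_{w ∈ W} (-1)^{ℓ(w)} e(w(χ)) ∈ ℤ[P]`. -/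
noncomputable def weylSum [Fintype C.weylGroup] (χ : C.P) : AddMonoidAlgebra ℤ C.P :=
  ∑ w : C.weylGroup, ((-1 : ℤ) ^ C.len w) • C.e (C.wP w χ)

/-- The intertwining operator `I_w : e(ψ) ↦ (-1)^{ℓ(w)} e(w⁻¹(ψ+ρ) - ρ)` on `ℤ[P]`. -/
noncomputable def intertwiner (w : C.weylGroup) :
    AddMonoidAlgebra ℤ C.P →ₗ[ℤ] AddMonoidAlgebra ℤ C.P :=
  ((-1 : ℤ) ^ C.len w) • AddMonoidAlgebra.mapDomainLinearMap ℤ ℤ (fun ψ => C.wP w⁻¹ (ψ + C.rhoP) - C.rhoP)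

/-- The defining property of the Demazure operator `D_α` attached to a root `α`:
`(1 - e(-α)) · D_α(f) = f - e(-α) · (s_α · f)` for all `f ∈ ℤ[P]`. -/
def IsDemazure {α : E} (h : α ∈ C.Φ)
    (D : AddMonoidAlgebra ℤ C.P →ₗ[ℤ] AddMonoidAlgebra ℤ C.P) : Prop :=
  ∀ f, (1 - C.e (-C.rootP h)) * D f = f - C.e (-C.rootP h) * C.act (C.sW h) f

/-- A weight is dominant if `⟨λ, α∨⟩ ≥ 0` for every positive root `α`. -/
def Dominant (x : C.P) : Prop := ∀ α ∈ C.pos, 0 ≤ C.coroot α x.1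

/-- The `ℤ`-submodule of `W`-anti-invariant elements of `ℤ[P]`. -/
noncomputable def antiInv : Submodule ℤ (AddMonoidAlgebra ℤ C.P) where
  carrier := {f | ∀ w : C.weylGroup, C.act w f = ((-1 : ℤ) ^ C.len w) • f}
  add_mem' := fun ha hb w => by rw [map_add, ha w, hb w, smul_add]
  zero_mem' := fun w => by rw [map_zero, smul_zero]
  smul_mem' := fun c x hx w => by rw [map_smul, hx w, smul_comm]

theorem neg_mem_Φ {α : E} (h : α ∈ C.Φ) : -α ∈ C.Φ := by
  have := C.reflect_mem α h α h
  rwa [C.coroot_self α h, two_smul, sub_add_cancel_left] at this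

theorem refl_apply {α : E} (h : α ∈ C.Φ) (y : E) :
    C.refl h y = y - C.coroot α y • α := C.isReflection_refl h y

theorem refl_refl {α : E} (h : α ∈ C.Φ) (y : E) : C.refl h (C.refl h y) = y := by
  simp only [refl_apply, map_sub, map_smul, C.coroot_self α h, smul_eq_mul]
  module

theorem isReflection_eq {g : E ≃ₗ[ℝ] E} {α : E} (hg : C.IsReflection g α) (h : α ∈ C.Φ) :
    g = C.refl h := by
  ext y; rw [hg y, refl_apply]

theorem isReflection_invol {g : E ≃ₗ[ℝ] E} {α : E} (h : α ∈ C.Φ) (hg : C.IsReflection g α)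
    (y : E) : g (g y) = y := by
  rw [isReflection_eq C hg h]; exact refl_refl C h y

theorem refl_root {α : E} (h : α ∈ C.Φ) : C.refl h α = -α := by
  rw [refl_apply, C.coroot_self α h, two_smul]; abel

/-- every element of the Weyl group maps `Φ` into `Φ` (and so does its inverse). -/
theorem weyl_maps_Φ (u : C.weylGroup) :
    (∀ β ∈ C.Φ, u.1 β ∈ C.Φ) ∧ (∀ β ∈ C.Φ, u.1.symm β ∈ C.Φ) := by
  obtain ⟨g, hg⟩ := u
  refine Subgroup.closure_induction (p := fun g _ =>
    (∀ β ∈ C.Φ, g β ∈ C.Φ) ∧ (∀ β ∈ C.Φ, g.symm β ∈ C.Φ)) ?_ ?_ ?_ ?_ hg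
  · rintro s ⟨α, hα, hs⟩
    have hssymm : ∀ y, s.symm y = s y := by
      intro y
      conv_lhs => rw [show y = s (s y) from (isReflection_invol C hα hs y).symm]
      rw [s.symm_apply_apply]
    constructor
    · intro β hβ
      rw [hs β]; exact C.reflect_mem α hα β hβ
    · intro β hβ
      rw [hssymm, hs β]; exact C.reflect_mem α hα β hβ
  · exact ⟨fun β hβ => hβ, fun β hβ => hβ⟩
  · rintro x y hx hy ⟨hx1, hx2⟩ ⟨hy1, hy2⟩
    exact ⟨fun β hβ => hx1 _ (hy1 β hβ), fun β hβ => hy2 _ (hx2 β hβ)⟩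
  · rintro x hx ⟨hx1, hx2⟩
    exact ⟨fun β hβ => hx2 β hβ, fun β hβ => hx1 β hβ⟩

theorem weyl_mem_Φ (u : C.weylGroup) {β : E} (hβ : β ∈ C.Φ) : u.1 β ∈ C.Φ :=
  (weyl_maps_Φ C u).1 β hβ

theorem weylGroup_finite : Finite C.weylGroup := by
  have hinj : Function.Injective
      (fun (u : C.weylGroup) => (fun x : {x // x ∈ C.Φ} => (⟨u.1 x.1, weyl_mem_Φ C u x.2⟩ :
        {x // x ∈ C.Φ}))) := by
    intro u v huv
    have : ∀ x ∈ C.Φ, u.1 x = v.1 x := by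
      intro x hx
      have := congrFun huv ⟨x, hx⟩
      exact congrArg Subtype.val this
    have : u.1.toLinearMap = v.1.toLinearMap := by
      apply LinearMap.ext_on C.span_eq_top
      intro x hx; exact this x hx
    exact Subtype.ext (LinearEquiv.toLinearMap_injective this)
  exact Finite.of_injective _ hinj
variable [FiniteDimensional ℝ E]

/-- An auxiliary positive definite form from a basis. -/
noncomputable def bform : E →ₗ[ℝ] E →ₗ[ℝ] ℝ :=
  LinearMap.mk₂ ℝ
    (fun x y => ∑ i, (Module.finBasis ℝ E).repr x i * (Module.finBasis ℝ E).repr y i)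
    (by intro m n y; simp [add_mul, Finset.sum_add_distrib])
    (by intro c m y; simp [Finset.mul_sum, mul_assoc])
    (by intro m n y; simp [mul_add, Finset.sum_add_distrib])
    (by intro c m y; simp only [map_smul, Finsupp.smul_apply, smul_eq_mul, Finset.mul_sum]; exact Finset.sum_congr rfl fun i _ => by ring)

theorem bform_symm (x y : E) : bform (E := E) x y = bform y x := by
  simp [bform]; ring_nf
  exact Finset.sum_congr rfl fun i _ => mul_comm _ _

theorem bform_pos {x : E} (hx : x ≠ 0) : 0 < bform (E := E) x x := by
  have : bform (E := E) x x = ∑ i, ((Module.finBasis ℝ E).repr x i)^2 := by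
    simp [bform, sq]
  rw [this]
  have hne : (Module.finBasis ℝ E).repr x ≠ 0 := by
    simp [hx]
  obtain ⟨i, hi⟩ := Finsupp.ne_iff.mp hne
  apply Finset.sum_pos' (fun i _ => sq_nonneg _)
  exact ⟨i, Finset.mem_univ i, pow_pos (abs_pos.mpr hi) 2 |>.trans_le (le_of_eq (sq_abs _))⟩

variable [Fintype C.weylGroup]

/-- The `W`-invariant positive definite form. -/
noncomputable def wform : E →ₗ[ℝ] E →ₗ[ℝ] ℝ :=
  LinearMap.mk₂ ℝ
    (fun x y => ∑ u : C.weylGroup, bform (u.1 x) (u.1 y))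
    (by intro m n y; simp [Finset.sum_add_distrib])
    (by intro c m y; simp [Finset.mul_sum])
    (by intro m n y; simp [Finset.sum_add_distrib])
    (by intro c m y; simp [Finset.mul_sum])

theorem wform_symm (x y : E) : C.wform x y = C.wform y x := by
  simp [wform]
  exact Finset.sum_congr rfl fun u _ => bform_symm _ _

theorem wform_pos {x : E} (hx : x ≠ 0) : 0 < C.wform x x := by
  simp only [wform, LinearMap.mk₂_apply]
  apply Finset.sum_pos' (fun u _ => le_of_lt (bform_pos (by simp [hx])))
  exact ⟨1, Finset.mem_univ 1, bform_pos (by simp [hx])⟩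

theorem wform_nonneg (x : E) : 0 ≤ C.wform x x := by
  rcases eq_or_ne x 0 with rfl | hx
  · simp
  · exact le_of_lt (C.wform_pos hx)

theorem wform_eq_zero {x : E} (hx : C.wform x x = 0) : x = 0 := by
  by_contra h
  exact absurd hx (ne_of_gt (C.wform_pos h))

theorem wform_inv (u : C.weylGroup) (x y : E) : C.wform (u.1 x) (u.1 y) = C.wform x y := by
  simp only [wform, LinearMap.mk₂_apply]
  refine Fintype.sum_equiv (Equiv.mulRight u) _ _ fun w => ?_
  simp [Equiv.mulRight]
theorem wform_root_ne {α : E} (h : α ∈ C.Φ) : C.wform α α ≠ 0 :=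
  ne_of_gt (C.wform_pos (C.root_ne_zero α h))

theorem coroot_eq {α : E} (h : α ∈ C.Φ) (y : E) :
    C.coroot α y = 2 * C.wform y α / C.wform α α := by
  have hinv := C.wform_inv (C.sW h) y α
  have hsα : (C.sW h).1 α = -α := refl_root C h
  have hsy : (C.sW h).1 y = y - C.coroot α y • α := refl_apply C h y
  rw [hsα, hsy] at hinv
  simp only [map_sub, map_neg, map_smul, LinearMap.sub_apply, LinearMap.neg_apply,
    LinearMap.smul_apply, smul_eq_mul] at hinv
  rw [eq_div_iff (C.wform_root_ne h)]
  nlinarith [hinv]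

theorem coroot_neg {α : E} (h : α ∈ C.Φ) (y : E) :
    C.coroot (-α) y = -C.coroot α y := by
  rw [coroot_eq C (neg_mem_Φ C h), coroot_eq C h]
  simp only [map_neg, LinearMap.neg_apply]
  field_simp

theorem coroot_pos_iff {α : E} (h : α ∈ C.Φ) (y : E) :
    0 < C.coroot α y ↔ 0 < C.wform y α := by
  rw [coroot_eq C h]
  constructor
  · intro hc
    by_contra hb
    push_neg at hb
    have : 2 * C.wform y α / C.wform α α ≤ 0 :=
      div_nonpos_of_nonpos_of_nonneg (by linarith) (C.wform_nonneg α)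
    linarith
  · intro hb
    exact div_pos (by linarith) (C.wform_pos (C.root_ne_zero α h))

/-- Cauchy–Schwarz with equality case for the invariant form. -/
theorem wform_cs {x y : E} (hy : y ≠ 0) :
    (C.wform x y)^2 ≤ C.wform x x * C.wform y y ∧
    ((C.wform x y)^2 = C.wform x x * C.wform y y → x = (C.wform x y / C.wform y y) • y) := by
  set t : ℝ := C.wform x y / C.wform y y with ht
  have hyy : 0 < C.wform y y := C.wform_pos hy
  have hexp : C.wform (x - t • y) (x - t • y)
      = C.wform x x - (C.wform x y)^2 / C.wform y y := by
    simp only [map_sub, map_smul, LinearMap.sub_apply, LinearMap.smul_apply, smul_eq_mul]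
    rw [show (C.wform y) x = (C.wform x) y from C.wform_symm y x]
    simp only [ht]
    field_simp
    ring
  have hnn := C.wform_nonneg (x - t • y)
  rw [hexp] at hnn
  constructor
  · have h1 : (C.wform x y)^2 / C.wform y y ≤ C.wform x x := by linarith
    calc (C.wform x y)^2 = ((C.wform x y)^2 / C.wform y y) * C.wform y y := by
          field_simp
      _ ≤ C.wform x x * C.wform y y := mul_le_mul_of_nonneg_right h1 hyy.le
  · intro heq
    have : C.wform (x - t • y) (x - t • y) = 0 := by
      rw [hexp, heq]; field_simp; simp
    have := C.wform_eq_zero this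
    rw [sub_eq_zero] at this
    rw [this]
theorem mem_pos_iff {β : E} : β ∈ C.pos ↔ β ∈ C.Φ ∧ 0 < C.posFun β := Finset.mem_filter

theorem pos_or_neg_pos {β : E} (h : β ∈ C.Φ) : β ∈ C.pos ∨ -β ∈ C.pos := by
  rcases lt_trichotomy (C.posFun β) 0 with hlt | heq | hgt
  · right
    exact mem_pos_iff C |>.mpr ⟨neg_mem_Φ C h, by simpa using hlt⟩
  · exact absurd heq (C.posFun_ne_zero β h)
  · left
    exact mem_pos_iff C |>.mpr ⟨h, hgt⟩

theorem mem_simple_iff {α : E} :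
    α ∈ C.simple ↔ α ∈ C.pos ∧ ¬ ∃ β ∈ C.pos, ∃ γ ∈ C.pos, α = β + γ := Finset.mem_filter

theorem smul_root_eq {α : E} (h : α ∈ C.Φ) {r : ℝ} (hr : 0 < r) (hmem : r • α ∈ C.Φ) :
    r = 1 := by
  rcases C.reduced α h r hmem with h1 | h1
  · exact h1
  · exfalso; rw [h1] at hr; linarith

theorem simple_wform_nonpos {s t : E} (hs : s ∈ C.simple) (ht : t ∈ C.simple) (hne : s ≠ t) :
    C.wform s t ≤ 0 := by
  by_contra hpos
  push_neg at hpos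
  have hsΦ : s ∈ C.Φ := C.simple_subset hs
  have htΦ : t ∈ C.Φ := C.simple_subset ht
  have hsP : s ∈ C.pos := (mem_simple_iff C |>.mp hs).1
  have htP : t ∈ C.pos := (mem_simple_iff C |>.mp ht).1
  have hss : 0 < C.wform s s := C.wform_pos (C.root_ne_zero s hsΦ)
  have htt : 0 < C.wform t t := C.wform_pos (C.root_ne_zero t htΦ)
  -- strict Cauchy-Schwarz
  have hcs := C.wform_cs (x := s) (y := t) (C.root_ne_zero t htΦ)
  have hstrict : (C.wform s t)^2 < C.wform s s * C.wform t t := by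
    rcases lt_or_eq_of_le hcs.1 with h | h
    · exact h
    · exfalso
      have hst : s = (C.wform s t / C.wform t t) • t := hcs.2 h
      have hr : (0:ℝ) < C.wform s t / C.wform t t := div_pos hpos htt
      have := smul_root_eq C htΦ hr (by rw [← hst]; exact hsΦ)
      rw [this, one_smul] at hst
      exact hne hst
  have hc : 0 < C.coroot t s := (coroot_pos_iff C htΦ s).mpr hpos
  have hc' : 0 < C.coroot s t := (coroot_pos_iff C hsΦ t).mpr
    (by rw [C.wform_symm t s]; exact hpos)
  obtain ⟨n, hn⟩ := C.crystallographic t htΦ s hsΦ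
  obtain ⟨n', hn'⟩ := C.crystallographic s hsΦ t htΦ
  have hn1 : 1 ≤ n := by
    by_contra hh
    push_neg at hh
    have : (n:ℝ) ≤ 0 := by exact_mod_cast (by omega : n ≤ 0)
    rw [hn] at hc; linarith
  have hn'1 : 1 ≤ n' := by
    by_contra hh
    push_neg at hh
    have : (n':ℝ) ≤ 0 := by exact_mod_cast (by omega : n' ≤ 0)
    rw [hn'] at hc'; linarith
  have hprod : ((n:ℝ)) * ((n':ℝ)) < 4 := by
    have e1 : (n:ℝ) = 2 * C.wform s t / C.wform t t := by
      rw [← hn, coroot_eq C htΦ]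
    have e2 : (n':ℝ) = 2 * C.wform t s / C.wform s s := by
      rw [← hn', coroot_eq C hsΦ]
    rw [e1, e2, C.wform_symm t s]
    rw [div_mul_div_comm]
    rw [div_lt_iff₀ (by positivity)]
    nlinarith [hstrict]
  have hone : n = 1 ∨ n' = 1 := by
    by_contra hh
    push_neg at hh
    have h2 : 2 ≤ n := by omega
    have h2' : 2 ≤ n' := by omega
    have : (4:ℝ) ≤ (n:ℝ) * (n':ℝ) := by
      have : (2:ℝ) ≤ (n:ℝ) := by exact_mod_cast h2
      have : (2:ℝ) ≤ (n':ℝ) := by exact_mod_cast h2'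
      nlinarith [show (2:ℝ) ≤ (n:ℝ) from by exact_mod_cast h2]
    linarith
  -- in either case, `s - t ∈ Φ`
  have hstΦ : s - t ∈ C.Φ := by
    rcases hone with h1 | h1
    · have := C.reflect_mem t htΦ s hsΦ
      rw [hn, h1] at this
      rw [show s - ((1:ℤ):ℝ) • t = s - t by push_cast; module] at this
      exact this
    · have := C.reflect_mem s hsΦ t htΦ
      rw [hn', h1] at this
      have h2 := neg_mem_Φ C this
      rw [show -(t - ((1:ℤ):ℝ) • s) = s - t by push_cast; module] at h2
      exact h2
  rcases pos_or_neg_pos C hstΦ with hp | hp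
  · exact (mem_simple_iff C |>.mp hs).2 ⟨s - t, hp, t, htP, by abel⟩
  · have : t - s ∈ C.pos := by simpa using hp
    exact (mem_simple_iff C |>.mp ht).2 ⟨t - s, this, s, hsP, by abel⟩
theorem simple_posFun_pos {s : E} (hs : s ∈ C.simple) : 0 < C.posFun s :=
  (mem_pos_iff C |>.mp (mem_simple_iff C |>.mp hs).1).2

theorem simple_indep (c : E → ℝ) (hc : ∑ s ∈ C.simple, c s • s = 0) :
    ∀ s ∈ C.simple, c s = 0 := by
  classical
  set Pp := C.simple.filter (fun s => 0 < c s) with hPp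
  set Np := C.simple.filter (fun s => ¬ 0 < c s) with hNp
  set v := ∑ s ∈ Pp, c s • s with hv
  have hsplit : v + ∑ s ∈ Np, c s • s = 0 := by
    rw [hv, hPp, hNp, Finset.sum_filter_add_sum_filter_not]
    exact hc
  have hveq : v = ∑ s ∈ Np, (-(c s)) • s := by
    have : v = -∑ s ∈ Np, c s • s := by linear_combination (norm := module) hsplit
    rw [this, ← Finset.sum_neg_distrib]
    exact Finset.sum_congr rfl fun s _ => (neg_smul _ _).symm
  have hvv : C.wform v v ≤ 0 := by
    conv_lhs => rw [show (C.wform v) v = C.wform v (∑ s ∈ Np, (-(c s)) • s) by rw [← hveq]]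
    rw [map_sum]
    apply Finset.sum_nonpos
    intro t htN
    rw [map_smul, smul_eq_mul]
    have hwvt : C.wform v t = ∑ s ∈ Pp, c s * C.wform s t := by
      rw [hv, map_sum, LinearMap.sum_apply]
      exact Finset.sum_congr rfl fun s _ => by rw [map_smul, LinearMap.smul_apply, smul_eq_mul]
    rw [hwvt, Finset.mul_sum]
    apply Finset.sum_nonpos
    intro s hsP
    have hs1 : s ∈ C.simple := Finset.mem_of_mem_filter s hsP
    have ht1 : t ∈ C.simple := Finset.mem_of_mem_filter t htN
    have hcs : 0 < c s := (Finset.mem_filter.mp hsP).2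
    have hct : ¬ 0 < c t := (Finset.mem_filter.mp htN).2
    have hne : s ≠ t := fun h => hct (h ▸ hcs)
    have hst : C.wform s t ≤ 0 := simple_wform_nonpos C hs1 ht1 hne
    have h1 : 0 ≤ -c t := by push_neg at hct; linarith
    have h2 : c s * C.wform s t ≤ 0 := by nlinarith
    nlinarith
  have hv0 : v = 0 := C.wform_eq_zero (le_antisymm hvv (C.wform_nonneg v))
  have hPsum : ∑ s ∈ Pp, c s * C.posFun s = 0 := by
    have := congrArg C.posFun hv0
    rw [hv] at this
    simpa [map_sum, map_smul, smul_eq_mul] using this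
  have hNsum : ∑ s ∈ Np, (-(c s)) * C.posFun s = 0 := by
    have := congrArg C.posFun hv0
    rw [hveq] at this
    simpa [map_sum, map_smul, smul_eq_mul] using this
  have hPzero : ∀ s ∈ Pp, c s * C.posFun s = 0 := by
    rw [← Finset.sum_eq_zero_iff_of_nonneg]
    · exact hPsum
    · intro s hsP
      have hcs : 0 < c s := (Finset.mem_filter.mp hsP).2
      have := simple_posFun_pos C (Finset.mem_of_mem_filter s hsP)
      positivity
  have hNzero : ∀ s ∈ Np, (-(c s)) * C.posFun s = 0 := by
    rw [← Finset.sum_eq_zero_iff_of_nonneg]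
    · exact hNsum
    · intro s hsN
      have hcs : ¬ 0 < c s := (Finset.mem_filter.mp hsN).2
      have := simple_posFun_pos C (Finset.mem_of_mem_filter s hsN)
      push_neg at hcs
      nlinarith
  intro s hs
  by_cases hcs : 0 < c s
  · have : s ∈ Pp := Finset.mem_filter.mpr ⟨hs, hcs⟩
    have := hPzero s this
    have hp := simple_posFun_pos C hs
    nlinarith
  · have : s ∈ Np := Finset.mem_filter.mpr ⟨hs, hcs⟩
    have := hNzero s this
    have hp := simple_posFun_pos C hs
    have : -(c s) = 0 := by
      by_contra hne
      have := mul_ne_zero hne (ne_of_gt hp)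
      exact this ‹-(c s) * C.posFun s = 0›
    linarith
/-- A measure for strong induction on positive roots. -/
noncomputable def pmeasure (β : E) : ℕ :=
  (C.pos.filter fun γ => C.posFun γ < C.posFun β).card

theorem pmeasure_lt {β γ : E} (hγ : γ ∈ C.pos) (h : C.posFun γ < C.posFun β) :
    pmeasure C γ < pmeasure C β := by
  apply Finset.card_lt_card
  constructor
  · intro δ hδ
    rw [Finset.mem_filter] at hδ ⊢
    exact ⟨hδ.1, lt_trans hδ.2 h⟩
  · intro hsub
    have : γ ∈ C.pos.filter fun δ => C.posFun δ < C.posFun β :=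
      Finset.mem_filter.mpr ⟨hγ, h⟩
    have := hsub this
    rw [Finset.mem_filter] at this
    exact lt_irrefl _ this.2

theorem pos_decomp {β : E} (hβ : β ∈ C.pos) :
    ∃ n : E → ℕ, β = ∑ s ∈ C.simple, (n s : ℝ) • s := by
  classical
  suffices key : ∀ N : ℕ, ∀ β, β ∈ C.pos → pmeasure C β < N →
      ∃ n : E → ℕ, β = ∑ s ∈ C.simple, (n s : ℝ) • s by
    exact key (pmeasure C β + 1) β hβ (Nat.lt_succ_self _)
  intro N
  induction N with
  | zero => intro β hβ h; omega
  | succ N ih =>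
    intro β hβ hm
    by_cases hs : β ∈ C.simple
    · refine ⟨fun s => if s = β then 1 else 0, ?_⟩
      rw [Finset.sum_eq_single_of_mem β hs]
      · simp
      · intro s hsmem hne
        simp [hne]
    · have hdec : ∃ β₁ ∈ C.pos, ∃ β₂ ∈ C.pos, β = β₁ + β₂ := by
        by_contra hne
        exact hs (mem_simple_iff C |>.mpr ⟨hβ, hne⟩)
      obtain ⟨β₁, hβ₁, β₂, hβ₂, heq⟩ := hdec
      have hp1 : 0 < C.posFun β₂ := (mem_pos_iff C |>.mp hβ₂).2
      have hp2 : 0 < C.posFun β₁ := (mem_pos_iff C |>.mp hβ₁).2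
      have hlt1 : C.posFun β₁ < C.posFun β := by
        rw [heq, map_add]; linarith
      have hlt2 : C.posFun β₂ < C.posFun β := by
        rw [heq, map_add]; linarith
      obtain ⟨n₁, hn₁⟩ := ih β₁ hβ₁ (by have := pmeasure_lt C hβ₁ hlt1; omega)
      obtain ⟨n₂, hn₂⟩ := ih β₂ hβ₂ (by have := pmeasure_lt C hβ₂ hlt2; omega)
      refine ⟨fun s => n₁ s + n₂ s, ?_⟩
      rw [heq, hn₁, hn₂, ← Finset.sum_add_distrib]
      refine Finset.sum_congr rfl fun s _ => ?_
      push_cast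
      rw [add_smul]

theorem exists_simple_coroot_pos {β : E} (hβ : β ∈ C.pos) :
    ∃ s ∈ C.simple, 0 < C.wform β s := by
  by_contra hne
  push_neg at hne
  obtain ⟨n, hn⟩ := pos_decomp C hβ
  have hβ0 : β ≠ 0 := C.root_ne_zero β (C.pos_subset hβ)
  have hpos : 0 < C.wform β β := C.wform_pos hβ0
  have : C.wform β β = ∑ s ∈ C.simple, (n s : ℝ) * C.wform β s := by
    conv_lhs => rw [show (C.wform β) β = C.wform β (∑ s ∈ C.simple, (n s : ℝ) • s) by
      rw [← hn]]
    rw [map_sum]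
    exact Finset.sum_congr rfl fun s _ => by rw [map_smul, smul_eq_mul]
  have hle : C.wform β β ≤ 0 := by
    rw [this]
    apply Finset.sum_nonpos
    intro s hsmem
    have h1 : (0:ℝ) ≤ (n s : ℝ) := Nat.cast_nonneg _
    have h2 : C.wform β s ≤ 0 := hne s hsmem
    nlinarith
  linarith

theorem simple_refl_pos {α β : E} (hα : α ∈ C.simple) (hβ : β ∈ C.pos) (hne : β ≠ α) :
    β - C.coroot α β • α ∈ C.pos := by
  classical
  have hαΦ : α ∈ C.Φ := C.simple_subset hα
  have hβΦ : β ∈ C.Φ := C.pos_subset hβ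
  have hγΦ : β - C.coroot α β • α ∈ C.Φ := C.reflect_mem α hαΦ β hβΦ
  set γ := β - C.coroot α β • α with hγ
  rcases pos_or_neg_pos C hγΦ with hp | hp
  · exact hp
  · exfalso
    obtain ⟨k, hk⟩ := C.crystallographic α hαΦ β hβΦ
    obtain ⟨n, hn⟩ := pos_decomp C hβ
    obtain ⟨m, hm⟩ := pos_decomp C hp
    have hq : ∀ s ∈ C.simple,
        ((n s : ℝ) + (m s : ℝ) - (if s = α then (k:ℝ) else 0)) = 0 := by
      apply simple_indep C
      have hsum : ∑ s ∈ C.simple,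
          ((n s : ℝ) + (m s : ℝ) - (if s = α then (k:ℝ) else 0)) • s
          = β + (-γ) - (k:ℝ) • α := by
        have hterm : ∀ s ∈ C.simple,
            ((n s : ℝ) + (m s : ℝ) - (if s = α then (k:ℝ) else 0)) • s
            = ((n s : ℝ) • s + (m s : ℝ) • s) - (if s = α then (k:ℝ) else 0) • s :=
          fun s _ => by rw [sub_smul, add_smul]
        rw [Finset.sum_congr rfl hterm, Finset.sum_sub_distrib, Finset.sum_add_distrib]
        rw [← hn, ← hm]
        congr 1
        rw [Finset.sum_eq_single_of_mem α hα]
        · simp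
        · intro s hsmem hsne
          simp [hsne]
      rw [hsum, hγ, ← hk]
      module
    have hn0 : ∀ s ∈ C.simple, s ≠ α → (n s : ℝ) = 0 := by
      intro s hsmem hsne
      have := hq s hsmem
      rw [if_neg hsne] at this
      have h1 : (0:ℝ) ≤ (n s : ℝ) := Nat.cast_nonneg _
      have h2 : (0:ℝ) ≤ (m s : ℝ) := Nat.cast_nonneg _
      linarith
    have hβα : β = (n α : ℝ) • α := by
      rw [hn, Finset.sum_eq_single_of_mem α hα]
      intro s hsmem hsne
      rw [hn0 s hsmem hsne, zero_smul]
    have hposn : (0:ℝ) < (n α : ℝ) := by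
      by_contra hc
      push_neg at hc
      have : (n α : ℝ) = 0 := le_antisymm hc (Nat.cast_nonneg _)
      rw [this, zero_smul] at hβα
      exact C.root_ne_zero β hβΦ hβα
    have := smul_root_eq C hαΦ hposn (by rw [← hβα]; exact hβΦ)
    rw [this, one_smul] at hβα
    exact hne hβα
theorem conj_isReflection (u : C.weylGroup) {β : E} (hβ : β ∈ C.Φ) :
    C.IsReflection (u.1 * C.refl hβ * (u.1)⁻¹) (u.1 β) := by
  intro y
  have hβ' : u.1 β ∈ C.Φ := weyl_mem_Φ C u hβ
  have hcor : C.coroot (u.1 β) y = C.coroot β (u.1.symm y) := by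
    rw [coroot_eq C hβ', coroot_eq C hβ]
    have h1 : C.wform y (u.1 β) = C.wform (u.1.symm y) β := by
      conv_lhs => rw [show y = u.1 (u.1.symm y) from (u.1.apply_symm_apply y).symm]
      exact C.wform_inv u _ _
    have h2 : C.wform (u.1 β) (u.1 β) = C.wform β β := C.wform_inv u _ _
    rw [h1, h2]
  show u.1 (C.refl hβ (u.1.symm y)) = _
  rw [refl_apply, map_sub, map_smul, u.1.apply_symm_apply, hcor]

theorem refl_mul_self {α : E} (h : α ∈ C.Φ) : C.refl h * C.refl h = 1 := by
  apply LinearEquiv.ext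
  intro y
  show C.refl h (C.refl h y) = y
  exact refl_refl C h y

theorem sW_mul_self {α : E} (h : α ∈ C.Φ) : C.sW h * C.sW h = 1 :=
  Subtype.ext (refl_mul_self C h)

/-- A word in simple reflections. -/
def IsSimpleWord (l : List C.weylGroup) : Prop :=
  ∀ s ∈ l, ∃ a ∈ C.simple, C.IsReflection s.1 a

theorem isSimpleWord_self_inv {s : C.weylGroup} (hs : ∃ a ∈ C.simple, C.IsReflection s.1 a) :
    s * s = 1 := by
  obtain ⟨a, ha, hrefl⟩ := hs
  have : s.1 = C.refl (C.simple_subset ha) := isReflection_eq C hrefl _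
  apply Subtype.ext
  show s.1 * s.1 = 1
  rw [this]
  exact refl_mul_self C _

theorem isSimpleWord_reverse_prod {l : List C.weylGroup} (hl : IsSimpleWord C l) :
    l.reverse.prod = l.prod⁻¹ := by
  induction l with
  | nil => simp
  | cons a t ih =>
    have ha : a * a = 1 := isSimpleWord_self_inv C (hl a (List.mem_cons_self))
    have hat : IsSimpleWord C t := fun s hs => hl s (List.mem_cons_of_mem a hs)
    have hainv : a⁻¹ = a := inv_eq_of_mul_eq_one_left ha
    rw [List.reverse_cons, List.prod_append, ih hat]
    show t.prod⁻¹ * (a * ([] : List C.weylGroup).prod) = (a * t.prod)⁻¹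
    rw [List.prod_nil, mul_one, mul_inv_rev, hainv]

/-- Every reflection in a positive root is a product of simple reflections. -/
theorem refl_word {α : E} (h : α ∈ C.pos) :
    ∃ l : List C.weylGroup, IsSimpleWord C l ∧ l.prod = C.sW (C.pos_subset h) := by
  classical
  suffices key : ∀ N : ℕ, ∀ α, (h : α ∈ C.pos) → pmeasure C α < N →
      ∃ l : List C.weylGroup, IsSimpleWord C l ∧ l.prod = C.sW (C.pos_subset h) by
    exact key (pmeasure C α + 1) α h (Nat.lt_succ_self _)
  intro N
  induction N with
  | zero => intro α h hm; omega
  | succ N ih =>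
    intro α h hm
    by_cases hsimp : α ∈ C.simple
    · refine ⟨[C.sW (C.pos_subset h)], ?_, ?_⟩
      · intro s hs
        rw [List.mem_singleton] at hs
        subst hs
        exact ⟨α, hsimp, C.isReflection_refl (C.pos_subset h)⟩
      · simp
    · obtain ⟨s, hsmem, hBαs⟩ := exists_simple_coroot_pos C h
      have hne : α ≠ s := fun hh => hsimp (hh ▸ hsmem)
      have hsΦ : s ∈ C.Φ := C.simple_subset hsmem
      have hαΦ : α ∈ C.Φ := C.pos_subset h
      have hc : 0 < C.coroot s α := (coroot_pos_iff C hsΦ α).mpr hBαs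
      have hγpos : α - C.coroot s α • s ∈ C.pos := simple_refl_pos C hsmem h hne
      set γ := α - C.coroot s α • s with hγdef
      have hγΦ : γ ∈ C.Φ := C.pos_subset hγpos
      have hps : 0 < C.posFun s := simple_posFun_pos C hsmem
      have hlt : C.posFun γ < C.posFun α := by
        rw [hγdef, map_sub, map_smul, smul_eq_mul]
        nlinarith
      obtain ⟨l, hlw, hlprod⟩ := ih γ hγpos (by have := pmeasure_lt C hγpos hlt; omega)
      -- conjugation: refl α = refl s * refl γ * refl s
      have hsγ : (C.sW hsΦ).1 γ = α := by
        have h1 : C.refl hsΦ α = γ := by rw [refl_apply]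
        show C.refl hsΦ γ = α
        rw [← h1, refl_refl]
      have hconj := conj_isReflection C (C.sW hsΦ) hγΦ
      rw [hsγ] at hconj
      have hinv : ((C.sW hsΦ).1)⁻¹ = (C.sW hsΦ).1 :=
        inv_eq_of_mul_eq_one_left (refl_mul_self C hsΦ)
      rw [hinv] at hconj
      have heq : C.refl hαΦ = C.refl hsΦ * C.refl hγΦ * C.refl hsΦ :=
        (isReflection_eq C hconj hαΦ).symm
      refine ⟨C.sW hsΦ :: (l ++ [C.sW hsΦ]), ?_, ?_⟩
      · intro t ht
        rcases List.mem_cons.mp ht with rfl | ht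
        · exact ⟨s, hsmem, C.isReflection_refl hsΦ⟩
        rcases List.mem_append.mp ht with ht | ht
        · exact hlw t ht
        · rw [List.mem_singleton] at ht
          subst ht
          exact ⟨s, hsmem, C.isReflection_refl hsΦ⟩
      · rw [List.prod_cons, List.prod_append, List.prod_singleton, hlprod]
        apply Subtype.ext
        show C.refl hsΦ * (C.refl hγΦ * C.refl hsΦ) = C.refl (C.pos_subset h)
        rw [← mul_assoc]
        exact heq.symm

/-- Every element of the Weyl group is a product of simple reflections. -/
theorem weyl_word (u : C.weylGroup) :
    ∃ l : List C.weylGroup, IsSimpleWord C l ∧ l.prod = u := by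
  obtain ⟨g, hg⟩ := u
  have : ∃ l : List C.weylGroup, IsSimpleWord C l ∧ (l.prod).1 = g := by
    refine Subgroup.closure_induction
      (p := fun g _ => ∃ l : List C.weylGroup, IsSimpleWord C l ∧ (l.prod).1 = g)
      ?_ ?_ ?_ ?_ hg
    · rintro x ⟨α, hαΦ, hrefl⟩
      have hx : x = C.refl hαΦ := isReflection_eq C hrefl hαΦ
      rcases pos_or_neg_pos C hαΦ with hp | hp
      · obtain ⟨l, hlw, hlprod⟩ := refl_word C hp
        exact ⟨l, hlw, by rw [hlprod, hx]; rfl⟩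
      · obtain ⟨l, hlw, hlprod⟩ := refl_word C hp
        refine ⟨l, hlw, ?_⟩
        rw [hlprod, hx]
        show C.refl (C.pos_subset hp) = C.refl hαΦ
        apply LinearEquiv.ext
        intro y
        rw [refl_apply, refl_apply, coroot_neg C hαΦ, neg_smul, smul_neg, neg_neg]
    · exact ⟨[], fun s hs => absurd hs List.not_mem_nil, rfl⟩
    · rintro x y hx hy ⟨lx, hlx, hlxp⟩ ⟨ly, hly, hlyp⟩
      refine ⟨lx ++ ly, ?_, ?_⟩
      · intro t ht
        rcases List.mem_append.mp ht with ht | ht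
        · exact hlx t ht
        · exact hly t ht
      · rw [List.prod_append]
        show (lx.prod).1 * (ly.prod).1 = x * y
        rw [hlxp, hlyp]
    · rintro x hx ⟨l, hlw, hlp⟩
      refine ⟨l.reverse, fun s hs => hlw s (List.mem_reverse.mp hs), ?_⟩
      rw [isSimpleWord_reverse_prod C hlw]
      show ((l.prod)⁻¹).1 = x⁻¹
      have : (l.prod).1 = x := hlp
      rw [← this]
      rfl
  obtain ⟨l, hlw, hlp⟩ := this
  exact ⟨l, hlw, Subtype.ext hlp⟩

theorem exists_word_of_length (w : C.weylGroup) :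
    ∃ l : List C.weylGroup, IsSimpleWord C l ∧ l.prod = w ∧ l.length = C.len w := by
  have hne : {n | ∃ l : List C.weylGroup,
      (∀ s ∈ l, ∃ α ∈ C.simple, C.IsReflection s.1 α) ∧ l.prod = w ∧ l.length = n}.Nonempty := by
    obtain ⟨l, hlw, hlp⟩ := weyl_word C w
    exact ⟨l.length, l, hlw, hlp, rfl⟩
  have := Nat.sInf_mem hne
  obtain ⟨l, hlw, hlp, hll⟩ := this
  exact ⟨l, hlw, hlp, hll⟩
theorem e_mul (x y : C.P) : C.e x * C.e y = C.e (x + y) := by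
  simp [e, AddMonoidAlgebra.single_mul_single]

theorem e_zero : C.e 0 = 1 := rfl

theorem e_sum {ι : Type} (s : Finset ι) (g : ι → C.P) :
    C.e (∑ i ∈ s, g i) = ∏ i ∈ s, C.e (g i) := by
  classical
  induction s using Finset.induction with
  | empty => simp [e_zero]
  | insert _ _ hx ih =>
    rw [Finset.sum_insert hx, Finset.prod_insert hx, ← ih, e_mul]

/-- The `W`-action on `P` as an additive monoid hom. -/
def wPHom (w : C.weylGroup) : C.P →+ C.P :=
  AddMonoidHom.mk' (C.wP w) (fun a b => by
    apply Subtype.ext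
    show w.1 ((a + b : C.P) : E) = w.1 a + w.1 b
    rw [AddSubgroup.coe_add, map_add])

theorem act_eq_mapDomain (w : C.weylGroup) (f : AddMonoidAlgebra ℤ C.P) :
    C.act w f = AddMonoidAlgebra.mapDomain (C.wP w) f := rfl

theorem amd_comp {X Y Z : Type} (g : X → Y) (h : Y → Z) (x : AddMonoidAlgebra ℤ X) :
    AddMonoidAlgebra.mapDomain (h ∘ g) x
      = AddMonoidAlgebra.mapDomain h (AddMonoidAlgebra.mapDomain g x) := by
  ext; simp [Finsupp.mapDomain_comp]

theorem act_mul (w : C.weylGroup) (f g : AddMonoidAlgebra ℤ C.P) :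
    C.act w (f * g) = C.act w f * C.act w g := by
  simp only [act_eq_mapDomain]
  exact AddMonoidAlgebra.mapDomain_mul (C.wPHom w) f g

theorem act_e (w : C.weylGroup) (x : C.P) : C.act w (C.e x) = C.e (C.wP w x) := by
  simp only [act_eq_mapDomain, e]
  exact AddMonoidAlgebra.mapDomain_single

theorem act_one (w : C.weylGroup) : C.act w 1 = 1 := by
  have h0 : C.wP w 0 = 0 := by
    apply Subtype.ext
    show w.1 ((0 : C.P) : E) = (0 : E)
    simp
  rw [← e_zero, act_e, h0]

theorem act_prod {ι : Type} (w : C.weylGroup) (s : Finset ι)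
    (g : ι → AddMonoidAlgebra ℤ C.P) :
    C.act w (∏ i ∈ s, g i) = ∏ i ∈ s, C.act w (g i) := by
  classical
  induction s using Finset.induction with
  | empty => simpa using act_one C w
  | insert _ _ hx ih => rw [Finset.prod_insert hx, Finset.prod_insert hx, act_mul, ih]

theorem act_act (u v : C.weylGroup) (f : AddMonoidAlgebra ℤ C.P) :
    C.act u (C.act v f) = C.act (u * v) f := by
  simp only [act_eq_mapDomain]
  rw [← amd_comp]
  rfl

theorem e_mul_eq_mapDomain (c : C.P) (f : AddMonoidAlgebra ℤ C.P) :
    C.e c * f = AddMonoidAlgebra.mapDomain (fun x => c + x) f := by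
  induction f using AddMonoidAlgebra.induction_linear with
  | zero => simp
  | add f g hf hg => rw [mul_add, AddMonoidAlgebra.mapDomain_add, hf, hg]
  | single a b =>
    show C.e c * AddMonoidAlgebra.single a b = _
    rw [AddMonoidAlgebra.mapDomain_single, e, AddMonoidAlgebra.single_mul_single, one_mul]

/-- Inclusion of an element of `E` into `P` (junk value `0` if not in `P`). -/
noncomputable def pe (β : E) : C.P :=
  open scoped Classical in
  if h : β ∈ C.P then ⟨β, h⟩ else 0

theorem pe_val {β : E} (h : β ∈ C.P) : ((C.pe β : C.P) : E) = β := by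
  classical
  rw [pe]
  split
  · rfl
  · exact absurd h (by assumption)

theorem root_mem_P {β : E} (h : β ∈ C.Φ) : β ∈ C.P := C.root_mem β h

theorem neg_root_mem_P {β : E} (h : β ∈ C.Φ) : -β ∈ C.P :=
  neg_mem (C.root_mem β h)

theorem denom_eq : C.denom = ∏ β ∈ C.pos, (1 - C.e (C.pe (-β))) := by
  rw [denom]
  rw [← Finset.prod_attach C.pos (fun β => 1 - C.e (C.pe (-β)))]
  refine Finset.prod_congr rfl fun α _ => ?_
  congr 1
  congr 1
  apply Subtype.ext
  rw [pe_val C (neg_root_mem_P C (C.pos_subset α.2))]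
  rfl
theorem e_factor {x y : C.P} (hxy : x + y = 0) :
    1 - C.e x = -(C.e x) * (1 - C.e y) := by
  have h1 : C.e x * C.e y = 1 := by rw [e_mul, hxy, e_zero]
  rw [neg_mul, mul_sub, mul_one, h1]
  ring

theorem wP_pe_neg (u : C.weylGroup) {β : E} (hβ : β ∈ C.Φ) :
    C.wP u (C.pe (-β)) = C.pe (-(u.1 β)) := by
  apply Subtype.ext
  show u.1 ((C.pe (-β) : C.P) : E) = _
  rw [pe_val C (neg_root_mem_P C hβ), pe_val C (neg_root_mem_P C (weyl_mem_Φ C u hβ)),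
    map_neg]

/-- The crucial sign computation: `u` applied to `e(ρ)·denom`. -/
theorem act_erho_denom (u : C.weylGroup) :
    C.act u (C.e C.rhoP * C.denom) =
      ((-1 : ℤ) ^ ((C.pos.filter fun β => C.posFun (u.1 β) < 0).card)) •
        (C.e C.rhoP * C.denom) := by
  classical
  set T := u.1 with hT
  set Bs := C.pos.filter fun β => C.posFun (T β) < 0 with hBs
  have hTΦ : ∀ β ∈ C.pos, T β ∈ C.Φ := fun β hβ => weyl_mem_Φ C u (C.pos_subset hβ)
  -- the bijection σ of the positive system
  set σ : E → E := fun β => if C.posFun (T β) < 0 then -(T β) else T β with hσ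
  have hσ_mem : ∀ β ∈ C.pos, σ β ∈ C.pos := by
    intro β hβ
    have hσβ : σ β = if C.posFun (T β) < 0 then -(T β) else T β := rfl
    rw [hσβ]
    by_cases hb : C.posFun (T β) < 0
    · rw [if_pos hb]
      exact mem_pos_iff C |>.mpr ⟨neg_mem_Φ C (hTΦ β hβ), by simpa using hb⟩
    · rw [if_neg hb]
      push_neg at hb
      have := C.posFun_ne_zero _ (hTΦ β hβ)
      exact mem_pos_iff C |>.mpr ⟨hTΦ β hβ, lt_of_le_of_ne hb (Ne.symm this)⟩
  have hσ_inj : ∀ β ∈ C.pos, ∀ β' ∈ C.pos, σ β = σ β' → β = β' := by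
    intro β hβ β' hβ' heq
    have hpβ : 0 < C.posFun β := (mem_pos_iff C |>.mp hβ).2
    have hpβ' : 0 < C.posFun β' := (mem_pos_iff C |>.mp hβ').2
    have hσβ : ∀ δ, σ δ = if C.posFun (T δ) < 0 then -(T δ) else T δ := fun _ => rfl
    rw [hσβ β, hσβ β'] at heq
    by_cases h1 : C.posFun (T β) < 0 <;> by_cases h2 : C.posFun (T β') < 0
    · rw [if_pos h1, if_pos h2, neg_inj] at heq
      exact T.injective heq
    · rw [if_pos h1, if_neg h2] at heq
      have : T (-β) = T β' := by rw [map_neg, heq]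
      have := T.injective this
      rw [← this] at hpβ'
      simp only [map_neg] at hpβ'
      linarith
    · rw [if_neg h1, if_pos h2] at heq
      have : T β = T (-β') := by rw [map_neg, heq]
      have := T.injective this
      rw [this] at hpβ
      simp only [map_neg] at hpβ
      linarith
    · rw [if_neg h1, if_neg h2] at heq
      exact T.injective heq
  have hσ_surj : ∀ γ ∈ C.pos, ∃ β ∈ C.pos, σ β = γ := by
    intro γ hγ
    have hγΦ : γ ∈ C.Φ := C.pos_subset hγ
    have hTsymm : T.symm γ ∈ C.Φ := (weyl_maps_Φ C u).2 γ hγΦ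
    rcases pos_or_neg_pos C hTsymm with hp | hp
    · refine ⟨T.symm γ, hp, ?_⟩
      have hσβ : ∀ δ, σ δ = if C.posFun (T δ) < 0 then -(T δ) else T δ := fun _ => rfl
      rw [hσβ, T.apply_symm_apply]
      rw [if_neg (by push_neg; exact le_of_lt (mem_pos_iff C |>.mp hγ).2)]
    · refine ⟨-T.symm γ, hp, ?_⟩
      have hσβ : ∀ δ, σ δ = if C.posFun (T δ) < 0 then -(T δ) else T δ := fun _ => rfl
      rw [hσβ, map_neg, T.apply_symm_apply]
      rw [if_pos (by simpa using (mem_pos_iff C |>.mp hγ).2), neg_neg]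
  -- sum identity
  have hsum_bij : ∑ β ∈ C.pos, σ β = ∑ γ ∈ C.pos, γ :=
    Finset.sum_bij (fun β hβ => σ β) hσ_mem hσ_inj
      (fun γ hγ => by obtain ⟨β, hβ, hβγ⟩ := hσ_surj γ hγ; exact ⟨β, hβ, hβγ⟩)
      (fun β hβ => rfl)
  have hsum_split : ∑ β ∈ C.pos, σ β
      = (∑ β ∈ Bs, -(T β)) + ∑ β ∈ C.pos.filter (fun β => ¬ C.posFun (T β) < 0), T β := by
    rw [hBs, ← Finset.sum_filter_add_sum_filter_not C.pos (fun β => C.posFun (T β) < 0)]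
    congr 1
    · exact Finset.sum_congr rfl fun β hβ => by
        show (if C.posFun (T β) < 0 then -(T β) else T β) = _
        exact if_pos (Finset.mem_filter.mp hβ).2
    · exact Finset.sum_congr rfl fun β hβ => by
        show (if C.posFun (T β) < 0 then -(T β) else T β) = _
        exact if_neg (Finset.mem_filter.mp hβ).2
  have hTsum : T (∑ β ∈ C.pos, β)
      = (∑ β ∈ Bs, T β) + ∑ β ∈ C.pos.filter (fun β => ¬ C.posFun (T β) < 0), T β := by
    rw [map_sum, hBs, ← Finset.sum_filter_add_sum_filter_not C.pos (fun β => C.posFun (T β) < 0)]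
  -- the rho identity in E
  have hrho : T C.rho - (∑ β ∈ Bs, T β) = C.rho := by
    set X := ∑ β ∈ C.pos, β with hX
    set SB := ∑ β ∈ Bs, T β with hSB
    have h1 : T X = X + (2:ℝ) • SB := by
      rw [hTsum, ← hsum_bij, hsum_split]
      rw [Finset.sum_neg_distrib]
      module
    have hrdef : C.rho = (2:ℝ)⁻¹ • X := rfl
    rw [hrdef, map_smul, h1]
    module
  -- now the algebra computation
  conv_lhs => rw [act_mul, act_e, denom_eq, act_prod]
  have hfact : ∀ β ∈ C.pos, C.act u (1 - C.e (C.pe (-β))) = 1 - C.e (C.pe (-(T β))) := by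
    intro β hβ
    rw [map_sub, act_e, wP_pe_neg C u (C.pos_subset hβ), act_one]
  rw [Finset.prod_congr rfl hfact]
  rw [← Finset.prod_filter_mul_prod_filter_not C.pos (fun β => C.posFun (T β) < 0)
    (fun β => 1 - C.e (C.pe (-(T β))))]
  have hBfact : ∀ β ∈ Bs, 1 - C.e (C.pe (-(T β)))
      = -(C.e (C.pe (-(T β)))) * (1 - C.e (C.pe (T β))) := by
    intro β hβ
    have hβp : β ∈ C.pos := Finset.mem_of_mem_filter β hβ
    apply e_factor
    apply Subtype.ext
    show ((C.pe (-(T β)) : C.P) : E) + ((C.pe (T β) : C.P) : E) = (0 : E)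
    rw [pe_val C (neg_root_mem_P C (hTΦ β hβp)), pe_val C (root_mem_P C (hTΦ β hβp))]
    abel
  rw [Finset.prod_congr rfl hBfact, Finset.prod_mul_distrib]
  set S : C.P := ∑ β ∈ Bs, C.pe (-(T β)) with hS
  have hsign : ∏ β ∈ Bs, -(C.e (C.pe (-(T β))))
      = ((-1 : AddMonoidAlgebra ℤ C.P) ^ Bs.card) * C.e S := by
    rw [hS, e_sum]
    rw [Finset.prod_congr rfl (fun β (_ : β ∈ Bs) =>
      (by ring : -(C.e (C.pe (-(T β)))) = (-1) * C.e (C.pe (-(T β)))))]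
    rw [Finset.prod_mul_distrib, Finset.prod_const]
  have hA : (∏ β ∈ Bs, (1 - C.e (C.pe (T β)))) *
      ∏ β ∈ C.pos.filter (fun β => ¬ C.posFun (T β) < 0), (1 - C.e (C.pe (-(T β))))
      = C.denom := by
    have hsplit : (∏ β ∈ Bs, (1 - C.e (C.pe (T β)))) *
        ∏ β ∈ C.pos.filter (fun β => ¬ C.posFun (T β) < 0), (1 - C.e (C.pe (-(T β))))
        = ∏ β ∈ C.pos, (1 - C.e (C.pe (-(σ β)))) := by
      rw [← Finset.prod_filter_mul_prod_filter_not C.pos (fun β => C.posFun (T β) < 0)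
        (fun β => 1 - C.e (C.pe (-(σ β))))]
      congr 1
      · refine Finset.prod_congr rfl fun β hβ => ?_
        have hmem := (Finset.mem_filter.mp hβ).2
        have hσβ : σ β = if C.posFun (T β) < 0 then -(T β) else T β := rfl
        rw [hσβ, if_pos hmem, neg_neg]
      · refine Finset.prod_congr rfl fun β hβ => ?_
        have hmem := (Finset.mem_filter.mp hβ).2
        have hσβ : σ β = if C.posFun (T β) < 0 then -(T β) else T β := rfl
        rw [hσβ, if_neg hmem]
    rw [hsplit, denom_eq]
    exact Finset.prod_bij (fun β _ => σ β) hσ_mem hσ_inj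
      (fun γ hγ => by obtain ⟨β, hβ, hβγ⟩ := hσ_surj γ hγ; exact ⟨β, hβ, hβγ⟩)
      (fun β hβ => rfl)
  have hErho : C.e (C.wP u C.rhoP) * C.e S = C.e C.rhoP := by
    rw [e_mul]
    congr 1
    apply Subtype.ext
    show T ((C.rhoP : C.P) : E) + ((S : C.P) : E) = C.rho
    have hscoe : ((S : C.P) : E) = ∑ β ∈ Bs, ((C.pe (-(T β)) : C.P) : E) := by
      rw [hS]
      exact map_sum C.P.subtype (fun β => C.pe (-(T β))) Bs
    have hscoe2 : ((S : C.P) : E) = -∑ β ∈ Bs, T β := by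
      rw [hscoe]
      rw [Finset.sum_congr rfl (fun β hβ =>
        pe_val C (neg_root_mem_P C (hTΦ β (Finset.mem_of_mem_filter β hβ))))]
      rw [Finset.sum_neg_distrib]
    rw [hscoe2]
    show T C.rho + -∑ β ∈ Bs, T β = C.rho
    linear_combination (norm := module) hrho
  have hsmul : ((-1 : ℤ) ^ Bs.card) • (C.e C.rhoP * C.denom)
      = ((-1 : AddMonoidAlgebra ℤ C.P) ^ Bs.card) * (C.e C.rhoP * C.denom) := by
    rw [zsmul_eq_mul]
    push_cast
    ring
  rw [hsign, hsmul, ← hA, ← hErho]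
  ring
/-- A fixed-point-free involution on a finite set forces even cardinality. -/
theorem even_card_of_fpf_involution {ι : Type} [DecidableEq ι] :
    ∀ (n : ℕ) (s : Finset ι) (i : ι → ι), s.card ≤ n →
    (∀ x ∈ s, i x ∈ s) → (∀ x ∈ s, i (i x) = x) → (∀ x ∈ s, i x ≠ x) →
    Even s.card := by
  intro n
  induction n with
  | zero =>
    intro s i hcard _ _ _
    simp only [Nat.le_zero] at hcard
    rw [hcard]
    exact Even.zero
  | succ n ih =>
    intro s i hcard hmaps hinv hfpf
    rcases s.eq_empty_or_nonempty with rfl | ⟨x, hx⟩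
    · simp
    · set s' := (s.erase x).erase (i x) with hs'
      have hixs : i x ∈ s := hmaps x hx
      have hixx : i x ≠ x := hfpf x hx
      have hixmem : i x ∈ s.erase x := Finset.mem_erase.mpr ⟨hixx, hixs⟩
      have hcard1 : (s.erase x).card = s.card - 1 := Finset.card_erase_of_mem hx
      have hcard2 : s'.card = s.card - 2 := by
        rw [hs', Finset.card_erase_of_mem hixmem, hcard1]
        omega
      have hmem' : ∀ y ∈ s', y ∈ s ∧ y ≠ x ∧ y ≠ i x := by
        intro y hy
        rw [hs', Finset.mem_erase, Finset.mem_erase] at hy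
        exact ⟨hy.2.2, hy.2.1, hy.1⟩
      have hmaps' : ∀ y ∈ s', i y ∈ s' := by
        intro y hy
        obtain ⟨hys, hyx, hyix⟩ := hmem' y hy
        rw [hs', Finset.mem_erase, Finset.mem_erase]
        refine ⟨?_, ?_, hmaps y hys⟩
        · intro hcon
          apply hyx
          rw [← hinv y hys, hcon, hinv x hx]
        · intro hcon
          apply hyix
          rw [← hinv y hys, hcon]
      have hs'le : s'.card ≤ n := by
        have h2 : 2 ≤ s.card := by
          have := Finset.card_erase_of_mem hixmem
          have h1 : 0 < (s.erase x).card := Finset.card_pos.mpr ⟨i x, hixmem⟩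
          omega
        omega
      have heven := ih s' i hs'le hmaps'
        (fun y hy => hinv y (hmem' y hy).1) (fun y hy => hfpf y (hmem' y hy).1)
      have h2 : 2 ≤ s.card := by
        have h1 : 0 < (s.erase x).card := Finset.card_pos.mpr ⟨i x, hixmem⟩
        omega
      have : s.card = s'.card + 2 := by omega
      rw [this]
      exact heven.add (even_two)

theorem refl_neg_card_odd {α : E} (h : α ∈ C.Φ) :
    Odd ((C.pos.filter fun β => C.posFun (C.refl h β) < 0).card) := by
  classical
  set S := C.pos.filter fun β => C.posFun (C.refl h β) < 0 with hSdef
  set i : E → E := fun β => -(C.refl h β) with hi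
  have hii : ∀ β, i (i β) = β := by
    intro β
    show -(C.refl h (-(C.refl h β))) = β
    rw [map_neg, neg_neg, refl_refl]
  have hmapsS : ∀ β ∈ S, i β ∈ S := by
    intro β hβ
    rw [hSdef, Finset.mem_filter] at hβ ⊢
    obtain ⟨hβp, hβneg⟩ := hβ
    have hβΦ : β ∈ C.Φ := C.pos_subset hβp
    have hrβΦ : C.refl h β ∈ C.Φ := by
      rw [refl_apply]
      exact C.reflect_mem α h β hβΦ
    constructor
    · refine mem_pos_iff C |>.mpr ⟨neg_mem_Φ C hrβΦ, ?_⟩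
      show 0 < C.posFun (-(C.refl h β))
      rw [map_neg]
      linarith
    · show C.posFun (C.refl h (i β)) < 0
      have : C.refl h (i β) = -β := by
        show C.refl h (-(C.refl h β)) = -β
        rw [map_neg, refl_refl]
      rw [this, map_neg]
      have := (mem_pos_iff C |>.mp hβp).2
      linarith
  -- the unique fixed point
  set p : E := if 0 < C.posFun α then α else -α with hp
  have hpS : p ∈ S := by
    rw [hSdef, Finset.mem_filter]
    by_cases hposα : 0 < C.posFun α
    · rw [hp, if_pos hposα]
      refine ⟨mem_pos_iff C |>.mpr ⟨h, hposα⟩, ?_⟩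
      rw [refl_root, map_neg]
      linarith
    · rw [hp, if_neg hposα]
      have hne := C.posFun_ne_zero α h
      have hneg : C.posFun α < 0 := lt_of_le_of_ne (not_lt.mp hposα) hne
      refine ⟨mem_pos_iff C |>.mpr ⟨neg_mem_Φ C h, by rw [map_neg]; linarith⟩, ?_⟩
      rw [map_neg, refl_root, neg_neg]
      exact hneg
  have hpfix : i p = p := by
    by_cases hposα : 0 < C.posFun α
    · rw [hp, if_pos hposα]
      show -(C.refl h α) = α
      rw [refl_root, neg_neg]
    · rw [hp, if_neg hposα]
      show -(C.refl h (-α)) = -α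
      rw [map_neg, refl_root, neg_neg]
  have hfixp : ∀ β ∈ S, i β = β → β = p := by
    intro β hβ hfix
    have hβp : β ∈ C.pos := Finset.mem_of_mem_filter β hβ
    have hβΦ : β ∈ C.Φ := C.pos_subset hβp
    have heq : (2:ℝ) • β = C.coroot α β • α := by
      have : -(C.refl h β) = β := hfix
      rw [refl_apply] at this
      linear_combination (norm := module) -this
    have hc0 : C.coroot α β ≠ 0 := by
      intro hc
      rw [hc, zero_smul] at heq
      have : β = 0 := by
        have h2 : (2:ℝ) ≠ 0 := two_ne_zero
        have := congrArg (fun z => (2:ℝ)⁻¹ • z) heq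
        simpa [smul_smul] using this
      exact C.root_ne_zero β hβΦ this
    set c : ℝ := C.coroot α β with hcdef
    have hβα : β = (c / 2) • α := by
      have h2 := congrArg (fun z => (2:ℝ)⁻¹ • z) heq
      simp only [smul_smul] at h2
      rw [show ((2:ℝ)⁻¹ * 2) = 1 by norm_num, one_smul] at h2
      rw [h2, show (2:ℝ)⁻¹ * c = c / 2 by ring]
    have hcases := C.reduced α h (c / 2) (by rw [← hβα]; exact hβΦ)
    have hβpos : 0 < C.posFun β := (mem_pos_iff C |>.mp hβp).2
    rcases hcases with h1 | h1
    · rw [h1, one_smul] at hβα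
      have hposα : 0 < C.posFun α := by rw [← hβα]; exact hβpos
      rw [hp, if_pos hposα]
      exact hβα
    · rw [h1, neg_one_smul] at hβα
      have hnegα : ¬ 0 < C.posFun α := by
        rw [hβα, map_neg] at hβpos
        push_neg
        linarith
      rw [hp, if_neg hnegα]
      exact hβα
  -- S.erase p has a fixed-point-free involution
  have heven : Even ((S.erase p).card) := by
    apply even_card_of_fpf_involution ((S.erase p).card) (S.erase p) i le_rfl
    · intro y hy
      obtain ⟨hyp, hyS⟩ := Finset.mem_erase.mp hy
      refine Finset.mem_erase.mpr ⟨?_, hmapsS y hyS⟩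
      intro hcon
      apply hyp
      rw [← hii y, hcon, hpfix]
    · intro y hy
      exact hii y
    · intro y hy
      obtain ⟨hyp, hyS⟩ := Finset.mem_erase.mp hy
      intro hcon
      exact hyp (hfixp y hyS hcon)
  have : S.card = (S.erase p).card + 1 := (Finset.card_erase_add_one hpS).symm
  rw [this]
  exact Even.add_one heven
theorem act_id (f : AddMonoidAlgebra ℤ C.P) : C.act 1 f = f := by
  rw [act_eq_mapDomain]
  have : C.wP 1 = id := by
    funext x
    apply Subtype.ext
    rfl
  rw [this]
  ext; simp

theorem act_sW_erho_denom {α : E} (h : α ∈ C.Φ) :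
    C.act (C.sW h) (C.e C.rhoP * C.denom) = -(C.e C.rhoP * C.denom) := by
  rw [act_erho_denom C (C.sW h)]
  have hodd : Odd ((C.pos.filter fun β => C.posFun ((C.sW h).1 β) < 0).card) :=
    refl_neg_card_odd C h
  rw [Odd.neg_one_pow hodd]
  exact neg_one_zsmul _

theorem act_simple_refl {s : C.weylGroup} (hs : ∃ a ∈ C.simple, C.IsReflection s.1 a) :
    C.act s (C.e C.rhoP * C.denom) = -(C.e C.rhoP * C.denom) := by
  obtain ⟨a, ha, hrefl⟩ := hs
  have hseq : s = C.sW (C.simple_subset ha) := Subtype.ext (isReflection_eq C hrefl (C.simple_subset ha))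
  rw [hseq]
  exact act_sW_erho_denom C _

theorem act_word (l : List C.weylGroup) (hl : IsSimpleWord C l) :
    C.act l.prod (C.e C.rhoP * C.denom)
      = ((-1 : ℤ) ^ l.length) • (C.e C.rhoP * C.denom) := by
  induction l with
  | nil =>
    rw [List.prod_nil, List.length_nil, pow_zero, one_smul]
    exact act_id C _
  | cons a t ih =>
    have hat : IsSimpleWord C t := fun s hs => hl s (List.mem_cons_of_mem a hs)
    have hha : ∃ b ∈ C.simple, C.IsReflection a.1 b := hl a (List.mem_cons_self)
    rw [List.prod_cons, ← act_act, ih hat, map_smul, act_simple_refl C hha,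
      List.length_cons, pow_succ, smul_neg, mul_smul, neg_one_zsmul, smul_neg]

theorem act_inv_erho_denom (w : C.weylGroup) :
    C.act w⁻¹ (C.e C.rhoP * C.denom)
      = ((-1 : ℤ) ^ C.len w) • (C.e C.rhoP * C.denom) := by
  obtain ⟨l, hlw, hlp, hll⟩ := exists_word_of_length C w
  have hrev : l.reverse.prod = w⁻¹ := by rw [isSimpleWord_reverse_prod C hlw, hlp]
  have hres := act_word C l.reverse (fun s hs => hlw s (List.mem_reverse.mp hs))
  rw [hrev, List.length_reverse, hll] at hres
  exact hres
end WeylContext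

/-- The intertwining operators fix the image of the localization map on invariants: for every
`w ∈ W` and every `W`-invariant `f ∈ ℤ[P]`,
`I_w(f · ∏_{α ∈ Φ⁺} (1 - e(-α))) = f · ∏_{α ∈ Φ⁺} (1 - e(-α))`. -/
theorem intertwiner_fixes_localized_invariants {E : Type} [AddCommGroup E] [Module ℝ E] [DecidableEq E] [FiniteDimensional ℝ E]
    (C : WeylContext E)
    (w : C.weylGroup) (f : AddMonoidAlgebra ℤ C.P)
    (hf : ∀ w' : C.weylGroup, C.act w' f = f) :
    C.intertwiner w (f * C.denom) = f * C.denom := by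
  have hfin : Finite C.weylGroup := WeylContext.weylGroup_finite C
  haveI : Fintype C.weylGroup := Fintype.ofFinite _
  show ((-1 : ℤ) ^ C.len w) •
      AddMonoidAlgebra.mapDomain (fun ψ => C.wP w⁻¹ (ψ + C.rhoP) - C.rhoP) (f * C.denom) = f * C.denom
  have hcomp : (fun ψ : C.P => C.wP w⁻¹ (ψ + C.rhoP) - C.rhoP)
      = (fun z : C.P => -C.rhoP + z) ∘ (C.wP w⁻¹) ∘ (fun ψ : C.P => C.rhoP + ψ) := by
    funext ψ
    show C.wP w⁻¹ (ψ + C.rhoP) - C.rhoP = -C.rhoP + C.wP w⁻¹ (C.rhoP + ψ)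
    rw [add_comm C.rhoP ψ, sub_eq_neg_add]
  rw [hcomp, WeylContext.amd_comp, WeylContext.amd_comp,
    ← WeylContext.e_mul_eq_mapDomain, ← WeylContext.act_eq_mapDomain,
    ← WeylContext.e_mul_eq_mapDomain]
  have hcommute : C.e C.rhoP * (f * C.denom) = f * (C.e C.rhoP * C.denom) := by ring
  rw [hcommute, WeylContext.act_mul, hf w⁻¹, WeylContext.act_inv_erho_denom C w]
  rw [mul_smul_comm, mul_smul_comm, smul_smul]
  have hsq : ((-1 : ℤ) ^ C.len w) * ((-1 : ℤ) ^ C.len w) = 1 := by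
    rw [← pow_add]
    exact Even.neg_one_pow ⟨C.len w, by ring⟩
  rw [hsq, one_smul]
  have he : C.e (-C.rhoP) * C.e C.rhoP = 1 := by
    rw [WeylContext.e_mul, neg_add_cancel, WeylContext.e_zero]
  calc C.e (-C.rhoP) * (f * (C.e C.rhoP * C.denom))
      = (C.e (-C.rhoP) * C.e C.rhoP) * (f * C.denom) := by ring
    _ = f * C.denom := by rw [he, one_mul]
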